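/- Let m ≥ 2, e ∈ (0,1), and b = (1−e)/(m−1), and let θ be the Plackett-Luce parameter over m alternatives with θ_1 = e and θ_j = b for all j ≥ 2. Fix 1 ≤ l ≤ m and a subset A' of l alternatives containing a_1. Then for every 1 ≤ i ≤ l, the total PL marginal probability of all l-way orders over A' that place a_1 at position i equals [∏_{q=1}^{i−1} (l−q)·b/(e + (l−q)·b)] · e/(e + (l−i)·b), which equals ((l−1)!/(l−i)!) · e · b^{i−1} / ∏_{p=l−i}^{l−1}(e + p·b). In particular this value does not depend on which size-l subset A' containing a_1 is chosen. -/

import Mathlib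

open Finset

/-- PL marginal probability of the `l`-way order `σ 0 ≻ σ 1 ≻ ⋯ ≻ σ (l-1)`
over the subset `{σ 0, …, σ (l-1)}`:
`∏_{p=1}^{l-1} θ_{i_p} / (∑_{q=p}^{l} θ_{i_q})` (the factor at `p = l` equals `1`). -/
noncomputable def PLway {m l : ℕ} (θ : Fin m → ℝ) (σ : Fin l → Fin m) : ℝ :=
  ∏ p : Fin l, θ (σ p) / (∑ q ∈ univ.filter (fun q : Fin l => p ≤ q), θ (σ q))

/-- **Equation (3) of the paper**: for the near-uniform PL parameter with
`θ_1 = e` and `θ_j = b = (1-e)/(m-1)` for `j ≥ 2`, and a subset `A'` of `l`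
alternatives containing `a_1`, the total PL marginal probability of all `l`-way
orders over `A'` that place `a_1` at position `i` (`1 ≤ i ≤ l`) equals
`[∏_{q=1}^{i-1} (l-q)·b/(e+(l-q)·b)] · e/(e+(l-i)·b)`, which equals
`((l-1)!/(l-i)!) · e · b^{i-1} / ∏_{p=l-i}^{l-1} (e+p·b)`; in particular this
value does not depend on which size-`l` subset `A'` containing `a_1` is
chosen. -/

-- reindexing helper
lemma reindex_aux (f : ℕ → ℝ) (l i : ℕ) (h1 : 1 ≤ i) (hil : i ≤ l) :
    ∏ p ∈ range i, f (l - 1 - p) = ∏ j ∈ Ico (l - i) l, f j := by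
  apply Finset.prod_nbij' (fun p => l - 1 - p) (fun j => l - 1 - j) <;>
    intros <;> simp_all [Finset.mem_range, Finset.mem_Ico] <;> omega

lemma reindex_aux2 (f : ℕ → ℝ) (l i : ℕ) (h1 : 1 ≤ i) (hil : i ≤ l) :
    ∏ q ∈ Icc 1 (i - 1), f (l - q) = ∏ j ∈ Ico (l - i + 1) l, f j := by
  apply Finset.prod_nbij' (fun q => l - q) (fun j => l - j) <;>
    intros <;> simp_all [Finset.mem_Icc, Finset.mem_Ico] <;> omega

lemma natfact_aux (l i : ℕ) (h1 : 1 ≤ i) (hil : i ≤ l) :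
    (∏ j ∈ Ico (l - i + 1) l, j) * Nat.factorial (l - i) = Nat.factorial (l - 1) := by
  have h2 : (∏ j ∈ Ico 1 (l - i + 1), j) * ∏ j ∈ Ico (l - i + 1) l, j
      = ∏ j ∈ Ico 1 l, j :=
    Finset.prod_Ico_consecutive _ (by omega) (by omega)
  have h3 : (∏ j ∈ Ico 1 (l - i + 1), j) = Nat.factorial (l - i) :=
    Finset.prod_Ico_id_eq_factorial _
  have h4 : (∏ j ∈ Ico 1 l, j) = Nat.factorial (l - 1) := by
    rw [show l = (l - 1) + 1 by omega, Finset.prod_Ico_id_eq_factorial]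
    simp
  rw [mul_comm]; rw [h3, h4] at h2; exact h2

lemma natfact_aux2 (l i : ℕ) (h1 : 1 ≤ i) (hil : i ≤ l) :
    (∏ p ∈ Ico i l, (l - p)) = Nat.factorial (l - i) := by
  rw [Finset.prod_Ico_eq_prod_range]
  rw [show ∏ x ∈ range (l - i), (l - (i + x)) = ∏ x ∈ range (l - i), ((l - i) - x) from
    Finset.prod_congr rfl (fun x hx => by simp at hx; omega)]
  rw [← Nat.descFactorial_eq_prod_range, Nat.descFactorial_self]

lemma hnum_aux (e b : ℝ) (i : ℕ) (hi1 : 1 ≤ i) :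
    ∏ p ∈ range i, (if p = i - 1 then e else b) = e * b ^ (i - 1) := by
  obtain ⟨j, rfl⟩ : ∃ j, i = j + 1 := ⟨i - 1, by omega⟩
  simp only [Nat.add_sub_cancel]
  rw [Finset.prod_range_succ, if_pos rfl,
    Finset.prod_congr rfl (fun p hp => if_neg (by simp at hp; omega)),
    Finset.prod_const, Finset.card_range]
  ring


lemma card_aux {l m : ℕ} (k : Fin l) (a0 : Fin m) (A' : Finset (Fin m))
    (hcard : A'.card = l) (hmem : a0 ∈ A') :
    (univ.filter (fun σ : Fin l → Fin m => Function.Injective σ ∧ image σ univ = A' ∧ σ k = a0)).card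
      = Nat.factorial (l - 1) := by
  classical
  have hl : 0 < l := k.pos
  have E : {σ : Fin l → Fin m // Function.Injective σ ∧ image σ univ = A' ∧ σ k = a0}
      ≃ ({q : Fin l // q ≠ k} ↪ {x // x ∈ A'.erase a0}) :=
    { toFun := fun σ =>
        ⟨fun q => ⟨σ.1 q.1, by
            rcases σ.2 with ⟨hinj, himg, hk⟩
            refine Finset.mem_erase.2 ⟨fun h => q.2 (hinj (h.trans hk.symm)), ?_⟩
            have : σ.1 q.1 ∈ image σ.1 univ := Finset.mem_image_of_mem _ (mem_univ _)
            rwa [himg] at this⟩,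
          fun q1 q2 h => Subtype.ext (σ.2.1 (congrArg Subtype.val h))⟩
      invFun := fun g =>
        ⟨fun p => if h : p = k then a0 else (g ⟨p, h⟩).1, by
          have hg : ∀ q : {q : Fin l // q ≠ k}, (g q).1 ∈ A'.erase a0 := fun q => (g q).2
          have hinj : Function.Injective
              (fun p : Fin l => if h : p = k then a0 else (g ⟨p, h⟩).1) := by
            intro p1 p2 h
            by_cases h1 : p1 = k <;> by_cases h2 : p2 = k <;>
              simp only [h1, h2, dif_pos, dif_neg, not_false_iff] at h
            · exact h1.trans h2.symm
            · exact absurd ((Finset.mem_erase.1 (hg ⟨p2, h2⟩)).1 h.symm) (by simp)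
            · exact absurd ((Finset.mem_erase.1 (hg ⟨p1, h1⟩)).1 h) (by simp)
            · have := g.injective (Subtype.ext h)
              exact congrArg Subtype.val this
          refine ⟨hinj, ?_, dif_pos rfl⟩
          apply Finset.eq_of_subset_of_card_le
          · intro x hx
            rcases Finset.mem_image.1 hx with ⟨p, _, rfl⟩
            by_cases h : p = k
            · simpa [h] using hmem
            · simpa [h] using Finset.mem_of_mem_erase (hg ⟨p, h⟩)
          · rw [Finset.card_image_of_injective _ hinj, card_univ, Fintype.card_fin, hcard]⟩
      left_inv := fun σ => by
        apply Subtype.ext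
        funext p
        by_cases h : p = k
        · simp only [h, dif_pos]; exact σ.2.2.2.symm
        · simp [h]; rfl
      right_inv := fun g => by
        ext q
        simp [q.2] }
  have h1 : (univ.filter (fun σ : Fin l → Fin m => Function.Injective σ ∧ image σ univ = A' ∧ σ k = a0)).card
      = Fintype.card {σ : Fin l → Fin m // Function.Injective σ ∧ image σ univ = A' ∧ σ k = a0} := by
    rw [Fintype.card_subtype]
  rw [h1, Fintype.card_congr E, Fintype.card_embedding_eq]
  have h2 : Fintype.card {q : Fin l // q ≠ k} = l - 1 := by
    simp [Fintype.card_subtype_compl]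
  have h3 : Fintype.card {x // x ∈ A'.erase a0} = l - 1 := by
    rw [Fintype.card_coe, Finset.card_erase_of_mem hmem, hcard]
  rw [h2, h3, Nat.descFactorial_self]

lemma plway_aux {l m : ℕ} (k : Fin l) (a0 : Fin m) (e b : ℝ) (θ : Fin m → ℝ)
    (hθ : ∀ j : Fin m, θ j = if (j : ℕ) = 0 then e else b) (ha0 : (a0 : ℕ) = 0)
    (σ : Fin l → Fin m) (hinj : Function.Injective σ) (hk : σ k = a0) :
    PLway θ σ = ∏ p ∈ range l, ((if p = (k : ℕ) then e else b) /
      (((l - p : ℕ) : ℝ) * b + if p ≤ (k : ℕ) then e - b else 0)) := by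
  have hval : ∀ q : Fin l, θ (σ q) = if (q : ℕ) = (k : ℕ) then e else b := by
    intro q
    rw [hθ]
    by_cases hq : q = k
    · simp [hq, hk, ha0]
    · have h1 : ¬ (σ q : ℕ) = 0 := by
        intro h
        apply hq
        apply hinj
        rw [hk]
        exact Fin.ext (h.trans ha0.symm)
      have h2 : ¬ (q : ℕ) = (k : ℕ) := fun h => hq (Fin.ext h)
      simp [h1, h2]
  have hden : ∀ p : Fin l, (∑ q ∈ univ.filter (fun q : Fin l => p ≤ q), θ (σ q))
      = ((l - (p : ℕ) : ℕ) : ℝ) * b + (if (p : ℕ) ≤ (k : ℕ) then e - b else 0) := by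
    intro p
    have hfil : univ.filter (fun q : Fin l => p ≤ q) = Ici p := by ext q; simp
    rw [Finset.sum_congr rfl (fun q _ => hval q)]
    have : ∀ q : Fin l, (if (q : ℕ) = (k : ℕ) then e else b)
        = b + (if q = k then e - b else 0) := by
      intro q
      by_cases hq : q = k
      · simp [hq]
      · rw [if_neg (fun h => hq (Fin.ext h)), if_neg hq]; ring
    rw [Finset.sum_congr rfl (fun q _ => this q), Finset.sum_add_distrib,
      Finset.sum_const, Finset.sum_ite_eq', hfil, Fin.card_Ici]
    simp only [Finset.mem_Ici, Fin.le_def, nsmul_eq_mul]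
  unfold PLway
  rw [show (∏ p : Fin l, θ (σ p) / (∑ q ∈ univ.filter (fun q : Fin l => p ≤ q), θ (σ q)))
      = ∏ p : Fin l, ((if (p : ℕ) = (k : ℕ) then e else b) /
        (((l - (p : ℕ) : ℕ) : ℝ) * b + if (p : ℕ) ≤ (k : ℕ) then e - b else 0)) from
    Finset.prod_congr rfl (fun p _ => by rw [hval p, hden p])]
  exact Fin.prod_univ_eq_prod_range (fun n => (if n = (k : ℕ) then e else b) /
    (((l - n : ℕ) : ℝ) * b + if n ≤ (k : ℕ) then e - b else 0)) l

theorem main_aux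
    (m : ℕ) (hm : 2 ≤ m) (e : ℝ) (he0 : 0 < e) (b : ℝ) (hb0 : 0 < b)
    (θ : Fin m → ℝ) (hθ : ∀ j : Fin m, θ j = if (j : ℕ) = 0 then e else b)
    (l : ℕ) (hl1 : 1 ≤ l) (hlm : l ≤ m)
    (A' : Finset (Fin m)) (hcard : A'.card = l)
    (i : ℕ) (hi1 : 1 ≤ i) (hil : i ≤ l)
    (k : Fin l) (a0 : Fin m) (hkv : (k : ℕ) = i - 1) (ha0 : (a0 : ℕ) = 0)
    (hmemA : a0 ∈ A') :
    ∑ σ ∈ univ.filter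
        (fun σ : Fin l → Fin m => Function.Injective σ ∧ image σ univ = A' ∧ σ k = a0),
        PLway θ σ
      = ((Nat.factorial (l - 1) : ℝ) / (Nat.factorial (l - i) : ℝ))
          * e * b ^ (i - 1) / ∏ p ∈ Ico (l - i) l, (e + (p : ℝ) * b) := by
  classical
  have hQpos : (0:ℝ) < ∏ j ∈ Ico (l - i) l, (e + (j : ℝ) * b) :=
    Finset.prod_pos (fun j _ => by positivity)
  have hPL : ∀ σ ∈ univ.filter
      (fun σ : Fin l → Fin m => Function.Injective σ ∧ image σ univ = A' ∧ σ k = a0),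
      PLway θ σ = ∏ p ∈ range l, ((if p = i - 1 then e else b) /
        (((l - p : ℕ) : ℝ) * b + if p ≤ i - 1 then e - b else 0)) := by
    intro σ hσ
    rw [Finset.mem_filter] at hσ
    rw [plway_aux k a0 e b θ hθ ha0 σ hσ.2.1 hσ.2.2.2, hkv]
  rw [Finset.sum_congr rfl hPL, Finset.sum_const,
    card_aux k a0 A' hcard hmemA, nsmul_eq_mul]
  -- split the product
  have hsplit : ∏ p ∈ range l, ((if p = i - 1 then e else b) /
        (((l - p : ℕ) : ℝ) * b + if p ≤ i - 1 then e - b else 0))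
      = (∏ p ∈ range i, ((if p = i - 1 then e else b) /
          (((l - p : ℕ) : ℝ) * b + if p ≤ i - 1 then e - b else 0)))
        * ∏ p ∈ Ico i l, ((if p = i - 1 then e else b) /
          (((l - p : ℕ) : ℝ) * b + if p ≤ i - 1 then e - b else 0)) := by
    rw [Finset.range_eq_Ico, ← Finset.prod_Ico_consecutive _ (Nat.zero_le i) hil, Finset.range_eq_Ico]
  have hA : (∏ p ∈ range i, ((if p = i - 1 then e else b) /
        (((l - p : ℕ) : ℝ) * b + if p ≤ i - 1 then e - b else 0)))
      = (e * b ^ (i - 1)) / ∏ j ∈ Ico (l - i) l, (e + (j : ℝ) * b) := by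
    have h1 : ∀ p ∈ range i, ((if p = i - 1 then e else b) /
        (((l - p : ℕ) : ℝ) * b + if p ≤ i - 1 then e - b else 0))
        = (if p = i - 1 then e else b) / (e + ((l - 1 - p : ℕ) : ℝ) * b) := by
      intro p hp
      simp only [Finset.mem_range] at hp
      rw [if_pos (by omega : p ≤ i - 1), show (l - p : ℕ) = (l - 1 - p) + 1 by omega]
      push_cast
      ring_nf
    rw [Finset.prod_congr rfl h1, Finset.prod_div_distrib,
      hnum_aux e b i hi1, reindex_aux (fun j => e + (j : ℝ) * b) l i hi1 hil]
  have hB : (∏ p ∈ Ico i l, ((if p = i - 1 then e else b) /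
        (((l - p : ℕ) : ℝ) * b + if p ≤ i - 1 then e - b else 0)))
      = ((Nat.factorial (l - i) : ℝ))⁻¹ := by
    have h1 : ∀ p ∈ Ico i l, ((if p = i - 1 then e else b) /
        (((l - p : ℕ) : ℝ) * b + if p ≤ i - 1 then e - b else 0))
        = (((l - p : ℕ) : ℝ))⁻¹ := by
      intro p hp
      simp only [Finset.mem_Ico] at hp
      rw [if_neg (by omega), if_neg (by omega), add_zero, mul_comm, ← div_div,
        div_self (ne_of_gt hb0), one_div]
    rw [Finset.prod_congr rfl h1, Finset.prod_inv_distrib, ← Nat.cast_prod,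
      natfact_aux2 l i hi1 hil]
  rw [hsplit, hA, hB]
  have hf0 : ((Nat.factorial (l - i) : ℝ)) ≠ 0 :=
    Nat.cast_ne_zero.2 (Nat.factorial_ne_zero _)
  field_simp
  ring

lemma shape_aux (e b : ℝ) (he0 : 0 < e) (hb0 : 0 < b)
    (l : ℕ) (hl1 : 1 ≤ l) (i : ℕ) (hi1 : 1 ≤ i) (hil : i ≤ l) :
    (∏ q ∈ Icc 1 (i - 1), ((l : ℝ) - q) * b / (e + ((l : ℝ) - q) * b))
        * (e / (e + ((l : ℝ) - i) * b))
      = ((Nat.factorial (l - 1) : ℝ) / (Nat.factorial (l - i) : ℝ))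
          * e * b ^ (i - 1) / ∏ p ∈ Ico (l - i) l, (e + (p : ℝ) * b) := by
  have h1 : ∀ q ∈ Icc 1 (i - 1),
      ((l : ℝ) - q) * b / (e + ((l : ℝ) - q) * b)
      = (fun j : ℕ => (j : ℝ) * b / (e + (j : ℝ) * b)) (l - q) := by
    intro q hq
    simp only [Finset.mem_Icc] at hq
    have hql : q ≤ l := by omega
    have hc : ((l : ℝ) - q) = ((l - q : ℕ) : ℝ) := by
      rw [Nat.cast_sub hql]
    rw [hc]
  rw [Finset.prod_congr rfl h1,
    reindex_aux2 (fun j : ℕ => (j : ℝ) * b / (e + (j : ℝ) * b)) l i hi1 hil]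
  have hci : ((l : ℝ) - i) = ((l - i : ℕ) : ℝ) := by rw [Nat.cast_sub hil]
  rw [hci, Finset.prod_eq_prod_Ico_succ_bot (show l - i < l by omega)
    (fun p : ℕ => e + (p : ℝ) * b)]
  rw [Finset.prod_div_distrib, Finset.prod_mul_distrib, Finset.prod_const,
    Nat.card_Ico, show l - (l - i + 1) = i - 1 by omega, ← Nat.cast_prod]
  have hnat := natfact_aux l i hi1 hil
  have hfac : ((∏ j ∈ Ico (l - i + 1) l, j : ℕ) : ℝ)
      = (Nat.factorial (l - 1) : ℝ) / (Nat.factorial (l - i) : ℝ) := by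
    rw [eq_div_iff (Nat.cast_ne_zero.2 (Nat.factorial_ne_zero _))]
    exact_mod_cast hnat
  rw [hfac]
  have hG0 : e + ((l - i : ℕ) : ℝ) * b ≠ 0 := by positivity
  have hQ0 : (∏ j ∈ Ico (l - i + 1) l, (e + (j : ℝ) * b)) ≠ 0 :=
    ne_of_gt (Finset.prod_pos (fun j _ => by positivity))
  have hf0 : (Nat.factorial (l - i) : ℝ) ≠ 0 :=
    Nat.cast_ne_zero.2 (Nat.factorial_ne_zero _)
  field_simp
  ring

theorem PL_lway_position_probability
    (m : ℕ) (hm : 2 ≤ m) (e : ℝ) (he : 0 < e ∧ e < 1)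
    (b : ℝ) (hb : b = (1 - e) / ((m : ℝ) - 1))
    (θ : Fin m → ℝ) (hθ : ∀ j : Fin m, θ j = if (j : ℕ) = 0 then e else b)
    (l : ℕ) (hl1 : 1 ≤ l) (hlm : l ≤ m)
    (A' : Finset (Fin m)) (hcard : A'.card = l) (hmem : (⟨0, by omega⟩ : Fin m) ∈ A')
    (i : ℕ) (hi1 : 1 ≤ i) (hil : i ≤ l) :
    (∑ σ ∈ univ.filter
        (fun σ : Fin l → Fin m => Function.Injective σ ∧ image σ univ = A' ∧
          σ ⟨i - 1, by omega⟩ = ⟨0, by omega⟩),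
        PLway θ σ
      = (∏ q ∈ Icc 1 (i - 1), ((l : ℝ) - q) * b / (e + ((l : ℝ) - q) * b))
          * (e / (e + ((l : ℝ) - i) * b)))
    ∧
    (∑ σ ∈ univ.filter
        (fun σ : Fin l → Fin m => Function.Injective σ ∧ image σ univ = A' ∧
          σ ⟨i - 1, by omega⟩ = ⟨0, by omega⟩),
        PLway θ σ
      = ((Nat.factorial (l - 1) : ℝ) / (Nat.factorial (l - i) : ℝ))
          * e * b ^ (i - 1) / ∏ p ∈ Ico (l - i) l, (e + (p : ℝ) * b)) := by
  classical
  obtain ⟨he0, he1⟩ := he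
  have hm2 : (2 : ℝ) ≤ (m : ℝ) := by exact_mod_cast hm
  have hb0 : 0 < b := by rw [hb]; apply div_pos <;> linarith
  have h2 := main_aux m hm e he0 b hb0 θ hθ l hl1 hlm A' hcard i hi1 hil
      ⟨i - 1, by omega⟩ ⟨0, by omega⟩ rfl rfl hmem
  exact ⟨h2.trans (shape_aux e b he0 hb0 l hl1 i hi1 hil).symm, h2⟩
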